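/- For any z₀ ∈ ℂ, the matrix identity K₂(y)·Ř·K₂(z₀)·Ř = Ř·K₂(z₀)·Ř·K₂(y) holds for all y ∈ ℂ if and only if h satisfies condition (★) at z₀, i.e. h_{i,j}(z₀)·h_{k,l}(y) = h_{i,j+k+2l}(z₀)·h_{2i+2k,2i+2l}(y) for all i,j,k,l ∈ ℤ/3ℤ and all y ∈ ℂ. -/

import Mathlib

open Matrix Kronecker

noncomputable section

abbrev Idx9 := Fin 3 × Fin 3

def flipP : Matrix Idx9 Idx9 ℂ := fun p q => if p.1 = q.2 ∧ p.2 = q.1 then 1 else 0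

def RD3 (z : ℂ) : Matrix Idx9 Idx9 ℂ := fun p q =>
  let pf := z * (z - 1) / (z ^ 2 - z + 1)
  let qf := z / (z ^ 2 - z + 1)
  let rf := (1 - z) / (z ^ 2 - z + 1)
  match p, q with
  | (0,0), (0,0) => 1
  | (1,1), (1,1) => 1
  | (2,2), (2,2) => 1
  | (0,1), (0,2) => pf
  | (0,2), (0,1) => pf
  | (1,0), (1,2) => pf
  | (1,2), (1,0) => pf
  | (2,0), (2,1) => pf
  | (2,1), (2,0) => pf
  | (0,1), (1,0) => qf
  | (0,2), (2,0) => qf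
  | (1,0), (0,1) => qf
  | (1,2), (2,1) => qf
  | (2,0), (0,2) => qf
  | (2,1), (1,2) => qf
  | (0,1), (2,1) => rf
  | (0,2), (1,2) => rf
  | (1,0), (2,0) => rf
  | (1,2), (0,2) => rf
  | (2,0), (1,0) => rf
  | (2,1), (0,1) => rf
  | _, _ => 0

def MD3 (z : ℂ) : Matrix Idx9 Idx9 ℂ := fun p q =>
  match p, q with
  | (0,0), (0,0) => z ^ 2 + 1
  | (1,1), (1,1) => z ^ 2 + 1
  | (2,2), (2,2) => z ^ 2 + 1
  | (0,0), (1,1) => z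
  | (0,0), (2,2) => z
  | (1,1), (0,0) => z
  | (1,1), (2,2) => z
  | (2,2), (0,0) => z
  | (2,2), (1,1) => z
  | (0,1), (0,2) => 1
  | (0,2), (0,1) => 1
  | (1,0), (1,2) => 1
  | (1,2), (1,0) => 1
  | (2,0), (2,1) => 1
  | (2,1), (2,0) => 1
  | (0,1), (1,0) => -z
  | (0,2), (2,0) => -z
  | (1,0), (0,1) => -z
  | (1,2), (2,1) => -z
  | (2,0), (0,2) => -z
  | (2,1), (1,2) => -z
  | (0,1), (2,1) => z ^ 2
  | (0,2), (1,2) => z ^ 2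
  | (1,0), (2,0) => z ^ 2
  | (1,2), (0,2) => z ^ 2
  | (2,0), (1,0) => z ^ 2
  | (2,1), (0,1) => z ^ 2
  | _, _ => 0

def curlR (z : ℂ) : Matrix Idx9 Idx9 ℂ :=
  ((z ^ 2 - z + 1) / ((z - 1) * (z ^ 3 - 1))) • MD3 z

def pt1 (A : Matrix Idx9 Idx9 ℂ) : Matrix Idx9 Idx9 ℂ :=
  fun p q => A (q.1, p.2) (p.1, q.2)

/-- The reflection equation (RE−). -/
def REminus (K : ℂ → Matrix (Fin 3) (Fin 3) ℂ) : Prop :=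
  ∀ x y : ℂ, x ≠ 0 → y ≠ 0 →
    (x * y⁻¹) ^ 2 - x * y⁻¹ + 1 ≠ 0 → (x * y) ^ 2 - x * y + 1 ≠ 0 →
    RD3 (x * y⁻¹) * (K x ⊗ₖ (1 : Matrix (Fin 3) (Fin 3) ℂ)) *
        (flipP * RD3 (x * y) * flipP) * ((1 : Matrix (Fin 3) (Fin 3) ℂ) ⊗ₖ K y)
      = ((1 : Matrix (Fin 3) (Fin 3) ℂ) ⊗ₖ K y) * RD3 (x * y) *
          (K x ⊗ₖ (1 : Matrix (Fin 3) (Fin 3) ℂ)) * (flipP * RD3 (x * y⁻¹) * flipP)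

/-- The dual reflection equation (RE+). -/
def REplus (K : ℂ → Matrix (Fin 3) (Fin 3) ℂ) : Prop :=
  ∀ x y : ℂ, x ≠ 0 → y ≠ 0 →
    (y * x⁻¹) ^ 2 - y * x⁻¹ + 1 ≠ 0 → (x * y) ^ 3 ≠ 1 →
    RD3 (y * x⁻¹) * (K x ⊗ₖ (1 : Matrix (Fin 3) (Fin 3) ℂ)) *
        (flipP * curlR (x * y) * flipP) * ((1 : Matrix (Fin 3) (Fin 3) ℂ) ⊗ₖ K y)
      = ((1 : Matrix (Fin 3) (Fin 3) ℂ) ⊗ₖ K y) * curlR (x * y) *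
          (K x ⊗ₖ (1 : Matrix (Fin 3) (Fin 3) ℂ)) * (flipP * RD3 (y * x⁻¹) * flipP)

def StarCond (h : ZMod 3 → ZMod 3 → ℂ → ℂ) (z₀ : ℂ) : Prop :=
  ∀ (i j k l : ZMod 3) (y : ℂ),
    h i j z₀ * h k l y = h i (j + k + 2 * l) z₀ * h (2 * i + 2 * k) (2 * i + 2 * l) y

def NonDiag (h : ZMod 3 → ZMod 3 → ℂ → ℂ) : Prop :=
  ∃ (i j : ZMod 3) (y : ℂ), i ≠ j ∧ h i j y ≠ 0

def Kof (h : ZMod 3 → ZMod 3 → ℂ → ℂ) (z : ℂ) : Matrix (Fin 3) (Fin 3) ℂ :=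
  fun a b => h (((a : ℕ) : ZMod 3) + 1) (((b : ℕ) : ZMod 3) + 1) z

/-- the constant reflection equation with `Ř = P·R(0)` holds for all `y`
iff `h` satisfies condition (★) at `z₀`. -/
def sigP (p : Idx9) : Idx9 := (2*(p.1+p.2), p.1)

def Rc : Matrix Idx9 Idx9 ℂ := fun p q => if q = sigP p then 1 else 0

lemma flipP_apply' (p r : Idx9) : flipP p r = if r = (p.2, p.1) then 1 else 0 := by
  simp [flipP, Prod.ext_iff, and_comm, eq_comm]

lemma flipP_mul (M : Matrix Idx9 Idx9 ℂ) : flipP * M = fun p q => M (p.2, p.1) q := by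
  ext p q
  simp [Matrix.mul_apply, flipP_apply', ite_mul, Finset.sum_ite_eq', Finset.mem_univ]

set_option maxHeartbeats 2000000 in
lemma RcEq : flipP * RD3 0 = Rc := by
  rw [flipP_mul]
  ext ⟨a,b⟩ ⟨c,d⟩
  fin_cases a <;> fin_cases b <;> fin_cases c <;> fin_cases d <;>
    first
      | rfl
      | (norm_num [RD3, Rc, sigP, Fin.ext_iff, Prod.ext_iff, Fin.val_mul, Fin.val_add] <;> rfl)

lemma Rc_apply' (p q : Idx9) : Rc p q = if p = (q.2, 2*(q.1+q.2)) then 1 else 0 := by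
  obtain ⟨a,b⟩ := p; obtain ⟨c,d⟩ := q
  fin_cases a <;> fin_cases b <;> fin_cases c <;> fin_cases d <;> rfl

lemma Rc_mul (M : Matrix Idx9 Idx9 ℂ) (p q : Idx9) : (Rc * M) p q = M (sigP p) q := by
  simp [Matrix.mul_apply, Rc, ite_mul, Finset.sum_ite_eq', Finset.mem_univ]

lemma mul_Rc (M : Matrix Idx9 Idx9 ℂ) (p q : Idx9) :
    (M * Rc) p q = M p (q.2, 2*(q.1+q.2)) := by
  simp [Matrix.mul_apply, Rc_apply', mul_ite, Finset.sum_ite_eq', Finset.mem_univ]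

lemma entryL (h : ZMod 3 → ZMod 3 → ℂ → ℂ) (y z₀ : ℂ) (p q : Idx9) :
    (((1 : Matrix (Fin 3) (Fin 3) ℂ) ⊗ₖ Kof h y) * (flipP * RD3 0) *
        ((1 : Matrix (Fin 3) (Fin 3) ℂ) ⊗ₖ Kof h z₀) * (flipP * RD3 0)) p q
      = Kof h y p.2 (2*(p.1+q.2)) * Kof h z₀ p.1 (2*(q.1+q.2)) := by
  rw [RcEq, mul_Rc, Matrix.mul_apply]
  simp only [mul_Rc]
  simp [Fintype.sum_prod_type, Matrix.kroneckerMap_apply, Matrix.one_apply,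
    ite_mul, mul_ite, zero_mul, mul_zero, one_mul, mul_one,
    Finset.sum_ite_eq, Finset.sum_ite_eq', Finset.mem_univ]
  exact Or.inl (by rw [add_comm])

lemma entryR (h : ZMod 3 → ZMod 3 → ℂ → ℂ) (y z₀ : ℂ) (p q : Idx9) :
    ((flipP * RD3 0) * ((1 : Matrix (Fin 3) (Fin 3) ℂ) ⊗ₖ Kof h z₀) *
        (flipP * RD3 0) * ((1 : Matrix (Fin 3) (Fin 3) ℂ) ⊗ₖ Kof h y)) p q
      = Kof h z₀ p.1 (2*(q.1 + 2*(p.1+p.2))) * Kof h y (2*(p.1+p.2)) q.2 := by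
  rw [RcEq, Matrix.mul_apply]
  simp only [mul_Rc, Rc_mul]
  simp [sigP, Fintype.sum_prod_type, Matrix.kroneckerMap_apply, Matrix.one_apply,
    ite_mul, mul_ite, zero_mul, mul_zero, one_mul, mul_one,
    Finset.sum_ite_eq, Finset.sum_ite_eq', Finset.mem_univ]

def toF (z : ZMod 3) : Fin 3 := z

theorem statement_2 (h : ZMod 3 → ZMod 3 → ℂ → ℂ) (z₀ : ℂ) :
    (∀ y : ℂ,
        ((1 : Matrix (Fin 3) (Fin 3) ℂ) ⊗ₖ Kof h y) * (flipP * RD3 0) *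
            ((1 : Matrix (Fin 3) (Fin 3) ℂ) ⊗ₖ Kof h z₀) * (flipP * RD3 0)
          = (flipP * RD3 0) * ((1 : Matrix (Fin 3) (Fin 3) ℂ) ⊗ₖ Kof h z₀) *
              (flipP * RD3 0) * ((1 : Matrix (Fin 3) (Fin 3) ℂ) ⊗ₖ Kof h y))
      ↔ StarCond h z₀ := by
  constructor
  · intro H i j k l y
    have e := congrFun (congrFun (H y) (toF (i-1), toF (k-1))) (toF (i+l-1-j), toF (2-i-l))
    rw [entryL, entryR] at e
    simp only [Kof, Prod.fst, Prod.snd] at e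
    have F1 : ∀ k : ZMod 3, ((toF (k-1) : ℕ) : ZMod 3) + 1 = k := by decide
    have F2 : ∀ i l : ZMod 3,
        ((2*(toF (i-1) + toF (2-i-l)) : Fin 3) : ℕ) + (1 : ZMod 3) = l := by decide
    have F3 : ∀ i j l : ZMod 3,
        ((2*(toF (i+l-1-j) + toF (2-i-l)) : Fin 3) : ℕ) + (1 : ZMod 3) = j := by decide
    have F4 : ∀ i j k l : ZMod 3,
        ((2*(toF (i+l-1-j) + 2*(toF (i-1) + toF (k-1))) : Fin 3) : ℕ) + (1 : ZMod 3)
          = j + k + 2*l := by decide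
    have F5 : ∀ i k : ZMod 3,
        ((2*(toF (i-1) + toF (k-1)) : Fin 3) : ℕ) + (1 : ZMod 3) = 2*i+2*k := by decide
    have F6 : ∀ i l : ZMod 3, ((toF (2-i-l) : ℕ) : ZMod 3) + 1 = 2*i+2*l := by decide
    rw [F1 k, F1 i, F2 i l, F3 i j l, F4 i j k l, F5 i k, F6 i l] at e
    linear_combination e
  · intro hs y
    ext p q
    rw [entryL, entryR]
    simp only [Kof]
    have e := hs (((p.1 : ℕ) : ZMod 3) + 1) (((2*(q.1+q.2) : Fin 3) : ℕ) + (1 : ZMod 3))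
      (((p.2 : ℕ) : ZMod 3) + 1) (((2*(p.1+q.2) : Fin 3) : ℕ) + (1 : ZMod 3)) y
    have D1 : ∀ p1 p2 q1 q2 : Fin 3,
        ((2*(q1+q2) : Fin 3) : ℕ) + (1 : ZMod 3) + (((p2 : ℕ) : ZMod 3) + 1)
            + 2*(((2*(p1+q2) : Fin 3) : ℕ) + (1 : ZMod 3))
          = ((2*(q1+2*(p1+p2)) : Fin 3) : ℕ) + (1 : ZMod 3) := by decide
    have D2 : ∀ p1 p2 : Fin 3,
        2*(((p1 : ℕ) : ZMod 3) + 1) + 2*(((p2 : ℕ) : ZMod 3) + 1)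
          = ((2*(p1+p2) : Fin 3) : ℕ) + (1 : ZMod 3) := by decide
    have D3 : ∀ p1 q2 : Fin 3,
        2*(((p1 : ℕ) : ZMod 3) + 1) + 2*(((2*(p1+q2) : Fin 3) : ℕ) + (1 : ZMod 3))
          = ((q2 : ℕ) : ZMod 3) + 1 := by decide
    rw [D1 p.1 p.2 q.1 q.2, D2 p.1 p.2, D3 p.1 q.2] at e
    linear_combination e
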